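/- Let Y be a geodesic manifold and let C ⊆ Y be a closed, connected, locally convex subset. Then C is weakly convex: any two points of C are the end points of some geodesic in Y. -/
import Mathlib


universe u v w

/-- A convexity-space structure on an (open) subset `U` of a topological space `Y`,
given by a map `C` assigning to points `x, y ∈ U` a subset `C x y ⊆ U`:
`U` with its subspace topology is Hausdorff, `C` is continuous (as a map into the
power set of `U` with the topology generated by `{A | A ⊆ W}`, `W` relatively open),
(C1) each `C x y` is convex, (C2) each `C x y` is minimal among the connected subsets of
`U` containing `x` and `y`, and (C3) `U` has a basis of convex (relatively) open sets.
Since `U` is required to be open in `Y`, relatively open subsets of `U` are exactly the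
open subsets of `Y` contained in `U`. -/
structure IsConvexitySpaceOn {Y : Type*} [TopologicalSpace Y] (U : Set Y)
    (C : Y → Y → Set Y) : Prop where
  /-- The carrier is open in the ambient space. -/
  isOpen : IsOpen U
  /-- `U` is Hausdorff in its subspace topology. -/
  t2 : ∀ x ∈ U, ∀ y ∈ U, x ≠ y →
    ∃ V W : Set Y, IsOpen V ∧ IsOpen W ∧ x ∈ V ∧ y ∈ W ∧ V ∩ W ∩ U = ∅
  /-- `C x y` is a subset of `U` for `x, y ∈ U`. -/
  segment_subset : ∀ x ∈ U, ∀ y ∈ U, C x y ⊆ U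
  /-- `C x y` contains `x`. -/
  mem_left : ∀ x ∈ U, ∀ y ∈ U, x ∈ C x y
  /-- `C x y` contains `y`. -/
  mem_right : ∀ x ∈ U, ∀ y ∈ U, y ∈ C x y
  /-- `C x y` is connected. -/
  preconnected : ∀ x ∈ U, ∀ y ∈ U, IsPreconnected (C x y)
  /-- (C1): `C x y` is convex. -/
  convex : ∀ x ∈ U, ∀ y ∈ U, ∀ u ∈ C x y, ∀ v ∈ C x y, C u v ⊆ C x y
  /-- (C2): `C x y` is minimal among the connected subsets of `U` containing `x, y`. -/
  minimal : ∀ x ∈ U, ∀ y ∈ U, ∀ A : Set Y, A ⊆ C x y → x ∈ A → y ∈ A →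
    IsPreconnected A → A = C x y
  /-- Continuity of `(x, y) ↦ C x y`. -/
  continuity : ∀ x ∈ U, ∀ y ∈ U, ∀ W : Set Y, IsOpen W → C x y ⊆ W →
    ∃ V V' : Set Y, IsOpen V ∧ IsOpen V' ∧ x ∈ V ∧ y ∈ V' ∧
      ∀ x' ∈ V ∩ U, ∀ y' ∈ V' ∩ U, C x' y' ⊆ W
  /-- (C3): `U` has a basis of convex open sets. -/
  basis : ∀ x ∈ U, ∀ W : Set Y, IsOpen W → x ∈ W →
    ∃ V : Set Y, IsOpen V ∧ x ∈ V ∧ V ⊆ W ∩ U ∧ ∀ u ∈ V, ∀ v ∈ V, C u v ⊆ V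

/-- A *local convexity structure* on a topological space `Y`: an open cover `atlas` of `Y`
by convexity spaces (chart `U` carrying the convexity map `seg U`) such that every convex
open subspace of a chart is again a chart, with the restricted convexity map. -/
structure LocalConvexityStructure (Y : Type*) [TopologicalSpace Y] where
  /-- The charts. -/
  atlas : Set (Set Y)
  /-- The convexity map of each chart: `seg U x y` is the minimal connected subset of the
  chart `U` joining `x` and `y`. -/
  seg : Set Y → Y → Y → Set Y
  /-- The charts cover `Y`. -/
  covers : ∀ y : Y, ∃ U ∈ atlas, y ∈ U
  /-- Each chart is a convexity space. -/
  convexity : ∀ U ∈ atlas, IsConvexitySpaceOn U (seg U)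
  /-- Every convex open subspace of a chart is a chart, with the restricted map. -/
  subchart : ∀ U ∈ atlas, ∀ V : Set Y, V ⊆ U → IsOpen V →
    (∀ u ∈ V, ∀ v ∈ V, seg U u v ⊆ V) →
    V ∈ atlas ∧ ∀ u ∈ V, ∀ v ∈ V, seg V u v = seg U u v

/-- A subset `A ⊆ Y` is convex (w.r.t. a local convexity structure) if `A ∩ U` is convex
in `U` for every chart `U`. -/
def LocalConvexityStructure.IsConvexSet {Y : Type*} [TopologicalSpace Y]
    (𝒱 : LocalConvexityStructure Y) (A : Set Y) : Prop :=
  ∀ U ∈ 𝒱.atlas, ∀ u ∈ A ∩ U, ∀ v ∈ A ∩ U, 𝒱.seg U u v ⊆ A ∩ U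

/-- The convex hull of `A ⊆ Y`: the smallest convex set containing `A`. -/
def LocalConvexityStructure.hull {Y : Type*} [TopologicalSpace Y]
    (𝒱 : LocalConvexityStructure Y) (A : Set Y) : Set Y :=
  ⋂₀ {B : Set Y | A ⊆ B ∧ 𝒱.IsConvexSet B}

/-- `U` is a member of `𝒱_e` with target chart `V`: `U` is an open subset of `Z` mapped by
`e` homeomorphically (injectively and relatively openly; `e` is continuous in context)
onto a convex subspace of the chart `V` of `Y`. -/
def IsEtaleChartTo {Z Y : Type*} [TopologicalSpace Z] [TopologicalSpace Y]
    (𝒱 : LocalConvexityStructure Y) (e : Z → Y) (U : Set Z) (V : Set Y) : Prop :=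
  IsOpen U ∧ Set.InjOn e U ∧
  (∀ W : Set Z, W ⊆ U → IsOpen W → ∃ O : Set Y, IsOpen O ∧ e '' W = O ∩ e '' U) ∧
  V ∈ 𝒱.atlas ∧ e '' U ⊆ V ∧
  ∀ p ∈ e '' U, ∀ q ∈ e '' U, 𝒱.seg V p q ⊆ e '' U

/-- `U ∈ 𝒱_e`: `U` is an open subset of `Z` mapped by `e` homeomorphically onto a convex
subspace of some chart of `Y`. -/
def IsEtaleChart {Z Y : Type*} [TopologicalSpace Z] [TopologicalSpace Y]
    (𝒱 : LocalConvexityStructure Y) (e : Z → Y) (U : Set Z) : Prop :=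
  ∃ V : Set Y, IsEtaleChartTo 𝒱 e U V

/-- A continuous map `e : Z → Y` from a connected space `Z` is *étale* (w.r.t. a local
convexity structure on `Y`) if `e` is closed and the charts `𝒱_e` cover `Z`. -/
structure IsEtale {Z Y : Type*} [TopologicalSpace Z] [TopologicalSpace Y]
    (𝒱 : LocalConvexityStructure Y) (e : Z → Y) : Prop where
  continuous : Continuous e
  connectedSpace : ConnectedSpace Z
  isClosedMap : IsClosedMap e
  charts_cover : ∀ z : Z, ∃ U : Set Z, IsEtaleChart 𝒱 e U ∧ z ∈ U

/-- `e : Z → Y` is *generated* by `F ⊆ Z` if there is no proper closed connected subset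
`A ⊊ Z` containing `F` such that `e(U ∩ A)` is convex for all `U ∈ 𝒱_e`. -/
def Generates {Z Y : Type*} [TopologicalSpace Z] [TopologicalSpace Y]
    (𝒱 : LocalConvexityStructure Y) (e : Z → Y) (F : Set Z) : Prop :=
  ¬ ∃ A : Set Z, A ≠ Set.univ ∧ IsClosed A ∧ IsPreconnected A ∧ F ⊆ A ∧
      ∀ U : Set Z, IsEtaleChart 𝒱 e U → 𝒱.IsConvexSet (e '' (U ∩ A))

/-- A *geodesic manifold*: a Hausdorff space `Y` with a local convexity structure such that
(G1) the closure of the convex hull of every finite set is compact, and (G2) for every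
étale map `e : Z → Y` with `Z` compact that is generated by a two-element set
`{x, y} ⊆ Z`, every connected subset of `Z` containing `x` and `y` is all of `Z`. -/
structure IsGeodesicManifold {Y : Type v} [TopologicalSpace Y]
    (𝒱 : LocalConvexityStructure Y) : Prop where
  t2 : T2Space Y
  /-- (G1). -/
  hull_compact : ∀ F : Set Y, F.Finite → IsCompact (closure (𝒱.hull F))
  /-- (G2). -/
  geodesic_minimal : ∀ (Z : Type v) [TopologicalSpace Z] (e : Z → Y),
    CompactSpace Z → IsEtale 𝒱 e → ∀ x y : Z, Generates 𝒱 e {x, y} →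
    ∀ A : Set Z, IsPreconnected A → x ∈ A → y ∈ A → A = Set.univ

/-- Star-finiteness of the convexity space `(U, C)` (relative to the ambient space `Y`,
`U` being open in `Y`): every closed star in `U` has a finite end set.  A star with center
`x ∈ U` and end set `E ⊆ U \ {x}` is the union `S = ⋃ z ∈ E, C x z` where the segments
`C x z` pairwise intersect exactly in `{x}` and the subspace topology of `S` is the finest
topology making all inclusions `C x z ↪ S` continuous (i.e. every `Z ⊆ S` whose trace on
each `C x z` is closed in `C x z` is closed in `S`); the star is closed if `S` is closed
in `U`. -/
def StarFiniteOn {Y : Type*} [TopologicalSpace Y] (U : Set Y) (C : Y → Y → Set Y) : Prop :=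
  ∀ x ∈ U, ∀ E : Set Y, E ⊆ U \ {x} →
    (∀ z ∈ E, ∀ z' ∈ E, z ≠ z' → C x z ∩ C x z' = {x}) →
    (∀ Z : Set Y, Z ⊆ (⋃ z ∈ E, C x z) →
      (∀ z ∈ E, ∃ F : Set Y, IsClosed F ∧ Z ∩ C x z = F ∩ C x z) →
      ∃ F : Set Y, IsClosed F ∧ Z = F ∩ (⋃ z ∈ E, C x z)) →
    (∃ F : Set Y, IsClosed F ∧ (⋃ z ∈ E, C x z) = F ∩ U) →
    E.Finite

/-- A *geodesic q-manifold*: a geodesic manifold all of whose charts are star-finite and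
regular (as subspaces). -/
structure IsGeodesicQManifold {Y : Type v} [TopologicalSpace Y]
    (𝒱 : LocalConvexityStructure Y) extends IsGeodesicManifold 𝒱 : Prop where
  starFinite : ∀ U ∈ 𝒱.atlas, StarFiniteOn U (𝒱.seg U)
  regular : ∀ U ∈ 𝒱.atlas, RegularSpace U

/-- A *geodesic* in `Y` joining `p` and `q`: an étale map `e : Z → Y` with `Z` compact,
generated by a two-element set `{x, y} ⊆ Z`, whose end points are `e x = p` and
`e y = q`. -/
structure GeodesicConnecting {Y : Type v} [TopologicalSpace Y]
    (𝒱 : LocalConvexityStructure Y) (p q : Y) : Type (v + 1) where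
  Z : Type v
  [ts : TopologicalSpace Z]
  e : Z → Y
  x : Z
  y : Z
  compact : CompactSpace Z
  etale : IsEtale 𝒱 e
  generates : Generates 𝒱 e {x, y}
  endpoint_left : e x = p
  endpoint_right : e y = q

/-- A subset `A ⊆ Y` is *weakly convex* if any two of its points are the end points of a
geodesic in `Y`. -/
def LocalConvexityStructure.WeaklyConvex {Y : Type v} [TopologicalSpace Y]
    (𝒱 : LocalConvexityStructure Y) (A : Set Y) : Prop :=
  ∀ p ∈ A, ∀ q ∈ A, Nonempty (GeodesicConnecting 𝒱 p q)

/- ### Auxiliary development -/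

section Aux

open Set Topology

variable {Y : Type v} [TopologicalSpace Y] {𝒱 : LocalConvexityStructure Y}

/-- A degenerate segment is a singleton. -/
lemma seg_self {U : Set Y} (hU : U ∈ 𝒱.atlas) {x : Y} (hx : x ∈ U) :
    𝒱.seg U x x = {x} := by
  have h := (𝒱.convexity U hU).minimal x hx x hx {x}
    (singleton_subset_iff.2 ((𝒱.convexity U hU).mem_left x hx x hx)) rfl rfl
    isPreconnected_singleton
  exact h.symm

lemma subset_hull (A : Set Y) : A ⊆ 𝒱.hull A := fun a ha B hB => hB.1 ha

lemma hull_mono {A B : Set Y} (h : A ⊆ B) : 𝒱.hull A ⊆ 𝒱.hull B := fun y hy S hS =>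
  hy S ⟨h.trans hS.1, hS.2⟩

lemma hull_isConvexSet (A : Set Y) : 𝒱.IsConvexSet (𝒱.hull A) := by
  intro U hU u hu v hv
  intro y hy
  refine ⟨fun B hB => ?_, (𝒱.convexity U hU).segment_subset u hu.2 v hv.2 hy⟩
  have := hB.2 U hU u ⟨hu.1 B hB, hu.2⟩ v ⟨hv.1 B hB, hv.2⟩ hy
  exact this.1

/-- A set closed under segments within a chart is preconnected (if nonempty). -/
lemma preconnected_of_chartConvex {U : Set Y} (hU : U ∈ 𝒱.atlas) {B : Set Y}
    (hBU : B ⊆ U) (hconv : ∀ a ∈ B, ∀ b ∈ B, 𝒱.seg U a b ⊆ B) {z : Y} (hz : z ∈ B) :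
    IsPreconnected B := by
  have : B = ⋃₀ {S | ∃ b ∈ B, S = 𝒱.seg U z b} := by
    apply Subset.antisymm
    · intro b hb
      exact ⟨𝒱.seg U z b, ⟨b, hb, rfl⟩,
        (𝒱.convexity U hU).mem_right z (hBU hz) b (hBU hb)⟩
    · rintro y ⟨S, ⟨b, hb, rfl⟩, hy⟩
      exact hconv z hz b hb hy
  rw [this]
  apply isPreconnected_sUnion z
  · rintro S ⟨b, hb, rfl⟩
    exact (𝒱.convexity U hU).mem_left z (hBU hz) b (hBU hb)
  · rintro S ⟨b, hb, rfl⟩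
    exact (𝒱.convexity U hU).preconnected z (hBU hz) b (hBU hb)

end Aux

section Aux2

open Set Topology

variable {Y : Type v} [TopologicalSpace Y] {𝒱 : LocalConvexityStructure Y}

/-- If `S \ {w}` is disconnected by `o₁, o₂`, then the piece `(S \ {w}) ∩ o₁` together
with `w` is preconnected. -/
lemma piece_union_singleton_preconnected {S : Set Y} (hS : IsPreconnected S) {w : Y}
    (hw : w ∈ S) {o₁ o₂ : Set Y} (ho₁ : IsOpen o₁) (ho₂ : IsOpen o₂)
    (hcov : S \ {w} ⊆ o₁ ∪ o₂) (hdisj : (S \ {w}) ∩ (o₁ ∩ o₂) = ∅) :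
    IsPreconnected ((S \ {w}) ∩ o₁ ∪ {w}) := by
  set A := (S \ {w}) ∩ o₁ with hA
  set T := A ∪ {w} with hT
  have aux : ∀ q₁ q₂ : Set Y, IsOpen q₁ → IsOpen q₂ → T ⊆ q₁ ∪ q₂ → w ∈ q₁ →
      (T ∩ q₂).Nonempty → T ∩ (q₁ ∩ q₂) = ∅ → False := by
    intro q₁ q₂ hq₁ hq₂ hTcov hwq₁ ⟨t, htT, htq₂⟩ hTdisj
    have hwq₂ : w ∉ q₂ := fun h => by
      have : w ∈ T ∩ (q₁ ∩ q₂) := ⟨Or.inr rfl, hwq₁, h⟩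
      rw [hTdisj] at this; exact this
    have htA : t ∈ A := by
      rcases htT with h | h
      · exact h
      · exact absurd (mem_singleton_iff.1 h ▸ htq₂) hwq₂
    have key := hS (q₁ ∪ o₂) (q₂ ∩ o₁) (hq₁.union ho₂) (hq₂.inter ho₁) ?_ ?_ ?_
    · obtain ⟨s, hsS, hsr₁, hsq₂, hso₁⟩ := key
      have hsw : s ≠ w := fun h => hwq₂ (h ▸ hsq₂)
      have hsA : s ∈ A := ⟨⟨hsS, hsw⟩, hso₁⟩
      rcases hsr₁ with h | h
      · have : s ∈ T ∩ (q₁ ∩ q₂) := ⟨Or.inl hsA, h, hsq₂⟩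
        rw [hTdisj] at this; exact this
      · have : s ∈ (S \ {w}) ∩ (o₁ ∩ o₂) := ⟨⟨hsS, hsw⟩, hso₁, h⟩
        rw [hdisj] at this; exact this
    · intro s hsS
      by_cases hsw : s = w
      · exact Or.inl (Or.inl (hsw ▸ hwq₁))
      · rcases hcov ⟨hsS, hsw⟩ with h | h
        · have hsA : s ∈ A := ⟨⟨hsS, hsw⟩, h⟩
          rcases hTcov (Or.inl hsA) with h' | h'
          · exact Or.inl (Or.inl h')
          · exact Or.inr ⟨h', h⟩
        · exact Or.inl (Or.inr h)
    · exact ⟨w, hw, Or.inl hwq₁⟩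
    · exact ⟨t, htA.1.1, htq₂, htA.2⟩
  intro q₁ q₂ hq₁ hq₂ hTcov hne₁ hne₂
  by_contra hne₃
  rw [Set.not_nonempty_iff_eq_empty] at hne₃
  have hwT : w ∈ T := Or.inr rfl
  rcases hTcov hwT with hwq | hwq
  · exact absurd (aux q₁ q₂ hq₁ hq₂ hTcov hwq hne₂ hne₃) not_false
  · refine absurd (aux q₂ q₁ hq₂ hq₁ (by rwa [union_comm]) hwq hne₁ ?_) not_false
    rw [inter_comm q₂ q₁]; exact hne₃

end Aux2

section Aux3

open Set Topology

variable {Y : Type v} [TopologicalSpace Y] {𝒱 : LocalConvexityStructure Y}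

/-- **Key lemma.** If `B` is closed under segments of the chart `U`, has compact closure
contained in `U`, then segments of `U` between points of `closure B` stay in `closure B`. -/
lemma seg_subset_closure [T2Space Y] {U : Set Y} (hU : U ∈ 𝒱.atlas) {B : Set Y}
    (hBU : closure B ⊆ U)
    (hBconv : ∀ a ∈ B, ∀ b ∈ B, 𝒱.seg U a b ⊆ B)
    (hBc : IsCompact (closure B))
    {u v : Y} (hu : u ∈ closure B) (hv : v ∈ closure B) :
    𝒱.seg U u v ⊆ closure B := by
  classical
  set CS := 𝒱.convexity U hU with hCS
  have huU : u ∈ U := hBU hu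
  have hvU : v ∈ U := hBU hv
  set S := 𝒱.seg U u v with hSdef
  have hSU : S ⊆ U := CS.segment_subset u huU v hvU
  have hSpre : IsPreconnected S := CS.preconnected u huU v hvU
  have huS : u ∈ S := CS.mem_left u huU v hvU
  have hvS : v ∈ S := CS.mem_right u huU v hvU
  intro w hwS
  by_contra hwE
  set E := closure B with hEdef
  have hBE : B ⊆ E := subset_closure
  have hwU : w ∈ U := hSU hwS
  have hwu : w ≠ u := fun h => hwE (h ▸ hu)
  have hwv : w ≠ v := fun h => hwE (h ▸ hv)
  -- a convex open neighborhood of `w` disjoint from `E`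
  obtain ⟨hw₀, hE₀, hw₀o, hE₀o, hwhw₀, hEhE₀, hdisj₀⟩ :=
    SeparatedNhds.of_isCompact_isCompact isCompact_singleton hBc
      (disjoint_singleton_left.2 hwE)
  obtain ⟨N, hNo, hwN, hNsub, hNconv⟩ := CS.basis w hwU hw₀ hw₀o (hwhw₀ rfl)
  have hNE : ∀ x ∈ N, x ∉ E := fun x hx hxE =>
    (disjoint_left.1 hdisj₀) ((hNsub hx).1) (hEhE₀ hxE)
  -- `S \ {w}` is disconnected
  have hnotpre : ¬ IsPreconnected (S \ {w}) := by
    intro hpre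
    have := CS.minimal u huU v hvU (S \ {w}) diff_subset
      ⟨huS, fun h => hwu (Set.mem_singleton_iff.1 h).symm⟩
      ⟨hvS, fun h => hwv (Set.mem_singleton_iff.1 h).symm⟩ hpre
    have hwmem : w ∈ S \ {w} := this ▸ hwS
    exact hwmem.2 rfl
  unfold IsPreconnected at hnotpre
  push_neg at hnotpre
  obtain ⟨o₁, o₂, ho₁, ho₂, hcov, hne₁, hne₂, hne₃⟩ := hnotpre
  -- the main machine, for `u ∈ o₁`, `v ∈ o₂`
  have machine : ∀ o₁ o₂ : Set Y, IsOpen o₁ → IsOpen o₂ → S \ {w} ⊆ o₁ ∪ o₂ →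
      (S \ {w}) ∩ (o₁ ∩ o₂) = ∅ → u ∈ o₁ → v ∈ o₂ → False := by
    clear hcov hne₁ hne₂ hne₃ ho₁ ho₂
    clear! o₁ o₂
    intro o₁ o₂ ho₁ ho₂ hcov hdisj huo₁ hvo₂
    set A₁ : Set Y := ((S \ {w}) ∩ o₁) \ N with hA₁
    set A₂ : Set Y := ((S \ {w}) ∩ o₂) \ N with hA₂
    set P₁ := closure A₁ ∩ E with hP₁
    set P₂ := closure A₂ ∩ E with hP₂
    have hP₁c : IsCompact P₁ :=
      hBc.of_isClosed_subset (isClosed_closure.inter hBc.isClosed) inter_subset_right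
    have hP₂c : IsCompact P₂ :=
      hBc.of_isClosed_subset (isClosed_closure.inter hBc.isClosed) inter_subset_right
    -- the two compacta are disjoint (chord argument)
    have hR : P₁ ∩ P₂ = ∅ := by
      by_contra hR
      obtain ⟨ξ, hξ₁, hξ₂⟩ := nonempty_iff_ne_empty.2 hR
      have hξE : ξ ∈ E := hξ₁.2
      have hξU : ξ ∈ U := hBU hξE
      have hξw : ξ ≠ w := fun h => (hNE w hwN) (h ▸ hξE)
      obtain ⟨hξ₀, hw₀', hξ₀o, hw₀'o, hξhξ₀, hwhw₀', hdisj₁⟩ := t2_separation hξw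
      obtain ⟨Nξ, hNξo, hξNξ, hNξsub, hNξconv⟩ := CS.basis ξ hξU hξ₀ hξ₀o hξhξ₀
      obtain ⟨a, haNξ, haA⟩ := mem_closure_iff.1 hξ₁.1 Nξ hNξo hξNξ
      obtain ⟨b, hbNξ, hbA⟩ := mem_closure_iff.1 hξ₂.1 Nξ hNξo hξNξ
      have haS : a ∈ S := haA.1.1.1
      have hbS : b ∈ S := hbA.1.1.1
      have haU : a ∈ U := hSU haS
      have hbU : b ∈ U := hSU hbS
      have hg : 𝒱.seg U a b ⊆ S := CS.convex u huU v hvU a haS b hbS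
      have hgNξ : 𝒱.seg U a b ⊆ Nξ := hNξconv a haNξ b hbNξ
      have hgw : w ∉ 𝒱.seg U a b := fun h =>
        (disjoint_left.1 hdisj₁) ((hNξsub (hgNξ h)).1) hwhw₀'
      have hgpre := CS.preconnected a haU b hbU
      obtain ⟨y, hyg, hyo₁, hyo₂⟩ := hgpre o₁ o₂ ho₁ ho₂
        (fun y hy => hcov ⟨hg hy, fun h => hgw (h ▸ hy)⟩)
        ⟨a, CS.mem_left a haU b hbU, haA.1.2⟩
        ⟨b, CS.mem_right a haU b hbU, hbA.1.2⟩
      have : y ∈ (S \ {w}) ∩ (o₁ ∩ o₂) :=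
        ⟨⟨hg hyg, fun h => hgw (h ▸ hyg)⟩, hyo₁, hyo₂⟩
      rw [hdisj] at this; exact this
    obtain ⟨O₁, O₂, hO₁o, hO₂o, hPO₁, hPO₂, hOdisj⟩ :=
      SeparatedNhds.of_isCompact_isCompact hP₁c hP₂c (disjoint_iff_inter_eq_empty.2 hR)
    -- the open set `W` around `S`
    set W := (O₁ ∪ O₂) ∪ (N ∪ Eᶜ) with hW
    have hWo : IsOpen W := ((hO₁o.union hO₂o).union (hNo.union hBc.isClosed.isOpen_compl))
    have hSW : S ⊆ W := by
      intro s hsS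
      by_cases hsN : s ∈ N
      · exact Or.inr (Or.inl hsN)
      by_cases hsE : s ∈ E
      · have hsw : s ≠ w := fun h => hsN (h ▸ hwN)
        rcases hcov ⟨hsS, hsw⟩ with h | h
        · exact Or.inl (Or.inl (hPO₁ ⟨subset_closure ⟨⟨⟨hsS, hsw⟩, h⟩, hsN⟩, hsE⟩))
        · exact Or.inl (Or.inr (hPO₂ ⟨subset_closure ⟨⟨⟨hsS, hsw⟩, h⟩, hsN⟩, hsE⟩))
      · exact Or.inr (Or.inr hsE)
    obtain ⟨Nu, Nv, hNuo, hNvo, huNu, hvNv, hcont⟩ :=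
      CS.continuity u huU v hvU W hWo hSW
    -- pick `u' ∈ B` near `u` in `O₁`, `v' ∈ B` near `v` in `O₂`
    have huO₁ : u ∈ O₁ := hPO₁ ⟨subset_closure ⟨⟨⟨huS, fun h => hwu (Set.mem_singleton_iff.1 h).symm⟩, huo₁⟩,
      fun h => hNE u h hu⟩, hu⟩
    have hvO₂ : v ∈ O₂ := hPO₂ ⟨subset_closure ⟨⟨⟨hvS, fun h => hwv (Set.mem_singleton_iff.1 h).symm⟩, hvo₂⟩,
      fun h => hNE v h hv⟩, hv⟩
    obtain ⟨u', hu'mem, hu'B⟩ := mem_closure_iff.1 hu (Nu ∩ O₁) (hNuo.inter hO₁o) ⟨huNu, huO₁⟩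
    obtain ⟨v', hv'mem, hv'B⟩ := mem_closure_iff.1 hv (Nv ∩ O₂) (hNvo.inter hO₂o) ⟨hvNv, hvO₂⟩
    have hu'U : u' ∈ U := hBU (hBE hu'B)
    have hv'U : v' ∈ U := hBU (hBE hv'B)
    have hS'W : 𝒱.seg U u' v' ⊆ W := hcont u' ⟨hu'mem.1, hu'U⟩ v' ⟨hv'mem.1, hv'U⟩
    have hS'B : 𝒱.seg U u' v' ⊆ B := hBconv u' hu'B v' hv'B
    have hS'O : 𝒱.seg U u' v' ⊆ O₁ ∪ O₂ := by
      intro y hy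
      rcases hS'W hy with h | h
      · exact h
      · rcases h with h | h
        · exact absurd (hBE (hS'B hy)) (hNE y h)
        · exact absurd (hBE (hS'B hy)) h
    obtain ⟨y, -, hyO₁, hyO₂⟩ := CS.preconnected u' hu'U v' hv'U O₁ O₂ hO₁o hO₂o hS'O
      ⟨u', CS.mem_left u' hu'U v' hv'U, hu'mem.2⟩
      ⟨v', CS.mem_right u' hu'U v' hv'U, hv'mem.2⟩
    exact (disjoint_left.1 hOdisj) hyO₁ hyO₂
  -- the same-side case
  have sameside : ∀ o₁ o₂ : Set Y, IsOpen o₁ → IsOpen o₂ → S \ {w} ⊆ o₁ ∪ o₂ →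
      (S \ {w}) ∩ (o₁ ∩ o₂) = ∅ → u ∈ o₁ → v ∈ o₁ → ((S \ {w}) ∩ o₂).Nonempty → False := by
    clear hcov hne₁ hne₂ hne₃ ho₁ ho₂
    clear! o₁ o₂
    intro o₁ o₂ ho₁ ho₂ hcov hdisj huo₁ hvo₁ ⟨b, hbS, hbo₂⟩
    have hpre := piece_union_singleton_preconnected hSpre hwS ho₁ ho₂ hcov hdisj
    have hsub : (S \ {w}) ∩ o₁ ∪ {w} ⊆ S := by
      rintro y (⟨⟨h, -⟩, -⟩ | h)
      · exact h
      · exact (mem_singleton_iff.1 h) ▸ hwS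
    have heq := CS.minimal u huU v hvU _ hsub
      (Or.inl ⟨⟨huS, fun h => hwu (Set.mem_singleton_iff.1 h).symm⟩, huo₁⟩)
      (Or.inl ⟨⟨hvS, fun h => hwv (Set.mem_singleton_iff.1 h).symm⟩, hvo₁⟩) hpre
    have hbmem : b ∈ (S \ {w}) ∩ o₁ ∪ {w} := heq ▸ hbS.1
    rcases hbmem with ⟨-, hbo₁⟩ | h
    · have : b ∈ (S \ {w}) ∩ (o₁ ∩ o₂) := ⟨hbS, hbo₁, hbo₂⟩
      rw [hdisj] at this; exact this
    · exact hbS.2 h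
  -- case analysis on which side `u` and `v` are
  have huw : u ∈ S \ {w} := ⟨huS, fun h => hwu (Set.mem_singleton_iff.1 h).symm⟩
  have hvw : v ∈ S \ {w} := ⟨hvS, fun h => hwv (Set.mem_singleton_iff.1 h).symm⟩
  rcases hcov huw with huo | huo <;> rcases hcov hvw with hvo | hvo
  · exact sameside o₁ o₂ ho₁ ho₂ hcov hne₃ huo hvo hne₂
  · exact machine o₁ o₂ ho₁ ho₂ hcov hne₃ huo hvo
  · refine machine o₂ o₁ ho₂ ho₁ (by rwa [union_comm]) ?_ huo hvo
    rw [inter_comm o₂ o₁]; exact hne₃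
  · refine sameside o₂ o₁ ho₂ ho₁ (by rwa [union_comm]) ?_ huo hvo ?_
    · rw [inter_comm o₂ o₁]; exact hne₃
    · exact hne₁

end Aux3

section Aux4

open Set Topology

variable {Y : Type v} [TopologicalSpace Y] {𝒱 : LocalConvexityStructure Y}

/-- Intersection of a nonempty chain of closed preconnected sets in a compact Hausdorff
space is preconnected. -/
lemma chain_sInter_preconnected {Z : Type*} [TopologicalSpace Z] [CompactSpace Z]
    [T2Space Z] {c : Set (Set Z)} (hne : c.Nonempty) (hchain : IsChain (· ⊆ ·) c)
    (hcl : ∀ A ∈ c, IsClosed A) (hpc : ∀ A ∈ c, IsPreconnected A) :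
    IsPreconnected (⋂₀ c) := by
  intro o₁ o₂ ho₁ ho₂ hcov hn₁ hn₂
  by_contra hn₃
  rw [Set.not_nonempty_iff_eq_empty] at hn₃
  have hIcl : IsClosed (⋂₀ c) := isClosed_sInter hcl
  set S₁ := ⋂₀ c \ o₂ with hS₁
  set S₂ := ⋂₀ c \ o₁ with hS₂
  have hS₁c : IsCompact S₁ := (hIcl.sdiff ho₂).isCompact
  have hS₂c : IsCompact S₂ := (hIcl.sdiff ho₁).isCompact
  have hdisjS : Disjoint S₁ S₂ := by
    rw [Set.disjoint_iff_inter_eq_empty]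
    ext x; simp only [mem_inter_iff, mem_diff, mem_empty_iff_false, iff_false]
    rintro ⟨⟨hx, hx₂⟩, -, hx₁⟩
    rcases hcov hx with h | h
    · exact hx₁ h
    · exact hx₂ h
  obtain ⟨W₁, W₂, hW₁o, hW₂o, hSW₁, hSW₂, hWdisj⟩ :=
    SeparatedNhds.of_isCompact_isCompact hS₁c hS₂c hdisjS
  -- some member of the chain is contained in `W₁ ∪ W₂`
  have hexists : ∃ A ∈ c, A ⊆ W₁ ∪ W₂ := by
    by_contra hnot
    push_neg at hnot
    haveI : Nonempty c := ⟨⟨hne.choose, hne.choose_spec⟩⟩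
    have key := IsCompact.nonempty_iInter_of_directed_nonempty_isCompact_isClosed
      (fun A : c => (A : Set Z) \ (W₁ ∪ W₂))
      (fun A A' => by
        rcases hchain.total A.2 A'.2 with h | h
        · exact ⟨A, Subset.rfl, diff_subset_diff_left h⟩
        · exact ⟨A', diff_subset_diff_left h, Subset.rfl⟩)
      (fun A => by
        obtain ⟨x, hxA, hx⟩ := not_subset.1 (hnot A A.2)
        exact ⟨x, hxA, hx⟩)
      (fun A => ((hcl A A.2).sdiff (hW₁o.union hW₂o)).isCompact)
      (fun A => (hcl A A.2).sdiff (hW₁o.union hW₂o))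
    obtain ⟨x, hx⟩ := key
    have hxI : x ∈ ⋂₀ c := fun A hA => (mem_iInter.1 hx ⟨A, hA⟩).1
    have hxW : x ∉ W₁ ∪ W₂ := (mem_iInter.1 hx ⟨hne.choose, hne.choose_spec⟩).2
    have : x ∈ S₁ ∪ S₂ := by
      by_cases h : x ∈ o₂
      · refine Or.inr ⟨hxI, fun h' => ?_⟩
        have : x ∈ ⋂₀ c ∩ (o₁ ∩ o₂) := ⟨hxI, h', h⟩
        rw [hn₃] at this; exact this
      · exact Or.inl ⟨hxI, h⟩
    rcases this with h | h
    · exact hxW (Or.inl (hSW₁ h))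
    · exact hxW (Or.inr (hSW₂ h))
  obtain ⟨A₀, hA₀c, hA₀W⟩ := hexists
  have hIsub : ⋂₀ c ⊆ A₀ := sInter_subset_of_mem hA₀c
  obtain ⟨x₁, hx₁⟩ := hn₁
  obtain ⟨x₂, hx₂⟩ := hn₂
  have hx₁S₁ : x₁ ∈ S₁ := ⟨hx₁.1, fun h => by
    have : x₁ ∈ ⋂₀ c ∩ (o₁ ∩ o₂) := ⟨hx₁.1, hx₁.2, h⟩
    rw [hn₃] at this; exact this⟩
  have hx₂S₂ : x₂ ∈ S₂ := ⟨hx₂.1, fun h => by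
    have : x₂ ∈ ⋂₀ c ∩ (o₁ ∩ o₂) := ⟨hx₂.1, h, hx₂.2⟩
    rw [hn₃] at this; exact this⟩
  obtain ⟨y, -, hyW₁, hyW₂⟩ := hpc A₀ hA₀c W₁ W₂ hW₁o hW₂o hA₀W
    ⟨x₁, hIsub hx₁.1, hSW₁ hx₁S₁⟩ ⟨x₂, hIsub hx₂.1, hSW₂ hx₂S₂⟩
  exact (disjoint_left.1 hWdisj) hyW₁ hyW₂

/-- Inclusion of a subset: canonical étale charts. -/
lemma subtype_chartTo {D O V : Set Y} (hO : IsOpen O) (hV : V ∈ 𝒱.atlas)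
    (h1 : O ∩ D ⊆ V) (h2 : ∀ a ∈ O ∩ D, ∀ b ∈ O ∩ D, 𝒱.seg V a b ⊆ O ∩ D) :
    IsEtaleChartTo 𝒱 (Subtype.val : D → Y) (Subtype.val ⁻¹' O) V := by
  have himg : Subtype.val '' ((Subtype.val : D → Y) ⁻¹' O) = O ∩ D := by
    rw [Subtype.image_preimage_coe, inter_comm]
  refine ⟨hO.preimage continuous_subtype_val, Subtype.val_injective.injOn, ?_, hV, ?_, ?_⟩
  · intro W hWsub hWo
    obtain ⟨OW, hOWo, hOW⟩ := isOpen_induced_iff.1 hWo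
    refine ⟨OW ∩ O, hOWo.inter hO, ?_⟩
    rw [himg]
    apply Subset.antisymm
    · rintro y ⟨⟨x, hxD⟩, hxW, rfl⟩
      have hxO : (⟨x, hxD⟩ : D) ∈ (Subtype.val : D → Y) ⁻¹' O := hWsub hxW
      rw [← hOW] at hxW
      exact ⟨⟨hxW, hxO⟩, hxO, hxD⟩
    · rintro y ⟨⟨hyOW, hyO⟩, hyO', hyD⟩
      exact ⟨⟨y, hyD⟩, by rw [← hOW]; exact hyOW, rfl⟩
  · rw [himg]; exact h1
  · rw [himg]; exact h2

/-- The inclusion of a compact, connected, locally convex subset is étale. -/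
lemma subtype_etale [T2Space Y] {D : Set Y} (hDc : IsCompact D) (hDpc : IsPreconnected D)
    (hDne : D.Nonempty)
    (hloc : ∀ z ∈ D, ∃ V ∈ 𝒱.atlas, z ∈ V ∧
      ∀ a ∈ D ∩ V, ∀ b ∈ D ∩ V, 𝒱.seg V a b ⊆ D ∩ V) :
    IsEtale 𝒱 (Subtype.val : D → Y) := by
  refine ⟨continuous_subtype_val, Subtype.connectedSpace ⟨hDne, hDpc⟩,
    (hDc.isClosed.isClosedEmbedding_subtypeVal).isClosedMap, ?_⟩
  intro z
  obtain ⟨V, hV, hzV, hconv⟩ := hloc z.1 z.2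
  refine ⟨Subtype.val ⁻¹' V, ⟨V, subtype_chartTo ((𝒱.convexity V hV).isOpen) hV
    inter_subset_left ?_⟩, hzV⟩
  intro a ha b hb
  have := hconv a ⟨ha.2, ha.1⟩ b ⟨hb.2, hb.1⟩
  intro y hy
  exact ⟨(this hy).2, (this hy).1⟩

end Aux4

section Aux5

open Set Topology

variable {Y : Type v} [TopologicalSpace Y] {𝒱 : LocalConvexityStructure Y}

lemma image_preimage_inter {D : Set Y} (O : Set Y) (A : Set (↥D)) :
    (Subtype.val '' ((Subtype.val ⁻¹' O) ∩ A) : Set Y) = O ∩ Subtype.val '' A := by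
  ext y
  constructor
  · rintro ⟨z, ⟨hzO, hzA⟩, rfl⟩
    exact ⟨hzO, z, hzA, rfl⟩
  · rintro ⟨hyO, z, hzA, rfl⟩
    exact ⟨z, ⟨hyO, hzA⟩, rfl⟩

/-- Main construction: a compact connected locally convex subset containing `p` and `q`
yields a geodesic joining `p` and `q`. -/
lemma geodesic_of_compact [T2Space Y] {D : Set Y} (hDc : IsCompact D)
    (hDpc : IsPreconnected D) {p q : Y} (hp : p ∈ D) (hq : q ∈ D)
    (hloc : ∀ z ∈ D, ∃ V ∈ 𝒱.atlas, z ∈ V ∧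
      ∀ a ∈ D ∩ V, ∀ b ∈ D ∩ V, 𝒱.seg V a b ⊆ D ∩ V) :
    Nonempty (GeodesicConnecting 𝒱 p q) := by
  classical
  haveI : CompactSpace (↥D) := isCompact_iff_compactSpace.mp hDc
  set x : ↥D := ⟨p, hp⟩ with hx
  set y : ↥D := ⟨q, hq⟩ with hy
  set 𝒯 : Set (Set ↥D) := {A | A ≠ Set.univ ∧ IsClosed A ∧ IsPreconnected A ∧
      ({x, y} : Set ↥D) ⊆ A ∧
      ∀ U : Set ↥D, IsEtaleChart 𝒱 (Subtype.val : D → Y) U →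
        𝒱.IsConvexSet (Subtype.val '' (U ∩ A))} with h𝒯
  rcases Set.eq_empty_or_nonempty 𝒯 with h𝒯e | h𝒯ne
  · -- `D` itself carries a geodesic
    refine ⟨⟨↥D, Subtype.val, x, y, inferInstance,
      subtype_etale hDc hDpc ⟨p, hp⟩ hloc, ?_, rfl, rfl⟩⟩
    rintro ⟨A, h1, h2, h3, h4, h5⟩
    have : A ∈ 𝒯 := ⟨h1, h2, h3, h4, h5⟩
    rw [h𝒯e] at this
    exact this
  · -- take a minimal element of `𝒯`
    obtain ⟨A₀, hA₀⟩ := h𝒯ne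
    have hzorn : ∀ c ⊆ 𝒯, IsChain (· ⊆ ·) c → c.Nonempty →
        ∃ lb ∈ 𝒯, ∀ s ∈ c, lb ⊆ s := by
      intro c hc𝒯 hchain hcne
      refine ⟨⋂₀ c, ⟨?_, ?_, ?_, ?_, ?_⟩, fun s hs => sInter_subset_of_mem hs⟩
      · obtain ⟨A, hA⟩ := hcne
        intro h
        exact (hc𝒯 hA).1 (Set.eq_univ_of_univ_subset (h ▸ sInter_subset_of_mem hA))
      · exact isClosed_sInter fun A hA => (hc𝒯 hA).2.1
      · exact chain_sInter_preconnected hcne hchain (fun A hA => (hc𝒯 hA).2.1)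
          (fun A hA => (hc𝒯 hA).2.2.1)
      · exact fun z hz => mem_sInter.2 fun A hA => (hc𝒯 hA).2.2.2.1 hz
      · intro U hU V' hV' a ha b hb
        intro s hs
        obtain ⟨A₁, hA₁⟩ := hcne
        have hmem : ∀ A ∈ c, s ∈ Subtype.val '' (U ∩ A) ∩ V' := by
          intro A hA
          refine (hc𝒯 hA).2.2.2.2 U hU V' hV' a ⟨?_, ha.2⟩ b ⟨?_, hb.2⟩ hs
          · obtain ⟨z, ⟨hzU, hzI⟩, rfl⟩ := ha.1
            exact ⟨z, ⟨hzU, hzI A hA⟩, rfl⟩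
          · obtain ⟨z, ⟨hzU, hzI⟩, rfl⟩ := hb.1
            exact ⟨z, ⟨hzU, hzI A hA⟩, rfl⟩
        obtain ⟨z₁, ⟨hz₁U, hz₁A⟩, hz₁⟩ := (hmem A₁ hA₁).1
        refine ⟨⟨z₁, ⟨hz₁U, mem_sInter.2 fun A hA => ?_⟩, hz₁⟩, (hmem A₁ hA₁).2⟩
        obtain ⟨z₂, ⟨hz₂U, hz₂A⟩, hz₂⟩ := (hmem A hA).1
        have : z₂ = z₁ := Subtype.val_injective (hz₂.trans hz₁.symm)
        exact this ▸ hz₂A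
    obtain ⟨Am, -, hAm⟩ := zorn_superset_nonempty 𝒯 hzorn A₀ hA₀
    -- the image of the minimal element
    set D' : Set Y := Subtype.val '' Am with hD'
    obtain ⟨hAmne, hAmcl, hAmpc, hAmxy, hAmconv⟩ := hAm.1
    have hD'c : IsCompact D' := (hAmcl.isCompact).image continuous_subtype_val
    have hD'pc : IsPreconnected D' := hAmpc.image _ continuous_subtype_val.continuousOn
    have hD'D : D' ⊆ D := by rintro - ⟨z, -, rfl⟩; exact z.2
    have hpD' : p ∈ D' := ⟨x, hAmxy (Or.inl rfl), rfl⟩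
    have hqD' : q ∈ D' := ⟨y, hAmxy (Or.inr rfl), rfl⟩
    -- local convexity of `D'`
    have hloc' : ∀ z ∈ D', ∃ V ∈ 𝒱.atlas, z ∈ V ∧
        ∀ a ∈ D' ∩ V, ∀ b ∈ D' ∩ V, 𝒱.seg V a b ⊆ D' ∩ V := by
      rintro - ⟨z, hzAm, rfl⟩
      obtain ⟨V, hV, hzV, hconv⟩ := hloc z.1 z.2
      have hchart : IsEtaleChartTo 𝒱 (Subtype.val : D → Y) (Subtype.val ⁻¹' V) V := by
        refine subtype_chartTo ((𝒱.convexity V hV).isOpen) hV inter_subset_left ?_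
        intro a ha b hb s hs
        have := hconv a ⟨ha.2, ha.1⟩ b ⟨hb.2, hb.1⟩ hs
        exact ⟨this.2, this.1⟩
      have hkey : Subtype.val '' ((Subtype.val ⁻¹' V) ∩ Am) = V ∩ D' :=
        image_preimage_inter V Am
      have hcvx := hAmconv _ ⟨V, hchart⟩
      rw [hkey] at hcvx
      refine ⟨V, hV, hzV, ?_⟩
      intro a ha b hb
      have := hcvx V hV a ⟨⟨ha.2, ha.1⟩, ha.2⟩ b ⟨⟨hb.2, hb.1⟩, hb.2⟩
      intro s hs
      exact ⟨(this hs).1.2, (this hs).2⟩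
    haveI : CompactSpace (↥D') := isCompact_iff_compactSpace.mp hD'c
    set x' : ↥D' := ⟨p, hpD'⟩ with hx'
    set y' : ↥D' := ⟨q, hqD'⟩ with hy'
    refine ⟨⟨↥D', Subtype.val, x', y', inferInstance,
      subtype_etale hD'c hD'pc ⟨p, hpD'⟩ hloc', ?_, rfl, rfl⟩⟩
    -- generation
    rintro ⟨B', hB'ne, hB'cl, hB'pc, hB'xy, hB'conv⟩
    set Bt : Set ↥D := (Subtype.val : D → Y) ⁻¹' (Subtype.val '' B') with hBt
    have hB'D : Subtype.val '' B' ⊆ D := by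
      rintro - ⟨b', -, rfl⟩; exact hD'D b'.2
    have hBtimg : Subtype.val '' Bt = Subtype.val '' B' := by
      rw [hBt, Subtype.image_preimage_coe]
      exact inter_eq_self_of_subset_right hB'D
    have hBtAm : Bt ⊆ Am := by
      intro z hz
      obtain ⟨b', hb', hbz⟩ := hz
      obtain ⟨a, haAm, ha⟩ : (b' : Y) ∈ D' := b'.2
      have : a = z := Subtype.val_injective (by rw [ha, hbz])
      exact this ▸ haAm
    have hBt𝒯 : Bt ∈ 𝒯 := by
      refine ⟨?_, ?_, ?_, ?_, ?_⟩
      · intro h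
        exact hAmne (Set.eq_univ_of_univ_subset (h ▸ hBtAm))
      · exact ((hB'cl.isCompact.image continuous_subtype_val).isClosed).preimage
          continuous_subtype_val
      · refine (Topology.IsInducing.subtypeVal.isPreconnected_image).1 ?_
        rw [hBtimg]
        exact hB'pc.image _ continuous_subtype_val.continuousOn
      · rintro z (rfl | rfl)
        · exact ⟨x', hB'xy (Or.inl rfl), rfl⟩
        · exact ⟨y', hB'xy (Or.inr rfl), rfl⟩
      · intro U hUchart
        obtain ⟨V₁, hUo, hUinj, hUimgs, hV₁, hUsub, hUconv⟩ := hUchart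
        obtain ⟨OU, hOUo, hOU⟩ := isOpen_induced_iff.1 hUo
        have hUeq : U = (Subtype.val ⁻¹' OU : Set ↥D) := hOU.symm
        have hkey : OU ∩ D' = Subtype.val '' (U ∩ Am) := by
          rw [hUeq, image_preimage_inter]
        have hAmU := hAmconv U ⟨V₁, hUo, hUinj, hUimgs, hV₁, hUsub, hUconv⟩
        rw [← hkey] at hAmU
        have hchart' : IsEtaleChartTo 𝒱 (Subtype.val : D' → Y) (Subtype.val ⁻¹' OU) V₁ := by
          refine subtype_chartTo hOUo hV₁ ?_ ?_
          · intro s hs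
            apply hUsub
            rw [hUeq, Subtype.image_preimage_coe]
            exact ⟨hD'D hs.2, hs.1⟩
          · intro a ha b hb
            have hsub : OU ∩ D' ⊆ V₁ := by
              intro s hs
              apply hUsub
              rw [hUeq, Subtype.image_preimage_coe]
              exact ⟨hD'D hs.2, hs.1⟩
            have := hAmU V₁ hV₁ a ⟨ha, hsub ha⟩ b ⟨hb, hsub hb⟩
            exact fun s hs => (this hs).1
        have := hB'conv _ ⟨V₁, hchart'⟩
        have himg2 : Subtype.val '' ((Subtype.val ⁻¹' OU) ∩ B') =
            Subtype.val '' (U ∩ Bt) := by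
          rw [image_preimage_inter, hUeq, image_preimage_inter, hBtimg]
        rwa [himg2] at this
    have hAmBt : Am ⊆ Bt := hAm.2 hBt𝒯 hBtAm
    have hBtAll : Subtype.val '' B' = D' := by
      have heq : Bt = Am := Subset.antisymm hBtAm hAmBt
      rw [← hBtimg, heq]
    apply hB'ne
    apply Set.eq_univ_of_forall
    intro b
    have : (b : Y) ∈ Subtype.val '' B' := by rw [hBtAll]; exact b.2
    obtain ⟨b'', hb'', hbb⟩ := this
    exact (Subtype.val_injective hbb) ▸ hb''
  
end Aux5

/-- Corollary of Theorem 3; Tietze–Nakajima–Klee type theorem: Let `Y`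
be a geodesic manifold and let `C ⊆ Y` be a closed, connected, locally convex subset
(every point of `C` has a chart `U ∈ 𝒱` around it such that `C ∩ U` is convex in `U`).
Then `C` is weakly convex: any two points of `C` are the end points of some geodesic
in `Y`. -/
theorem stmt_19 {Y : Type v} [TopologicalSpace Y] (𝒱 : LocalConvexityStructure Y)
    (hY : IsGeodesicManifold 𝒱) (C : Set Y)
    (hclosed : IsClosed C) (hconn : IsConnected C)
    (hlc : ∀ z ∈ C, ∃ U ∈ 𝒱.atlas, z ∈ U ∧
      ∀ u ∈ C ∩ U, ∀ v ∈ C ∩ U, 𝒱.seg U u v ⊆ C ∩ U) :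
    𝒱.WeaklyConvex C := by
  haveI : T2Space Y := hY.t2
  classical
  intro p hp q hq
  -- Step 1: chain-connectedness within charts
  choose Uz hUz hzUz hUzconv using hlc
  set step : Y → Y → Prop := fun a b => a ∈ C ∧ b ∈ C ∧ ∃ U ∈ 𝒱.atlas, a ∈ U ∧ b ∈ U ∧
    ∀ u ∈ C ∩ U, ∀ v ∈ C ∩ U, 𝒱.seg U u v ⊆ C ∩ U with hstep
  have hreach : Relation.ReflTransGen step p q := by
    by_contra hq'
    set o₁ : Set Y := ⋃ (z : Y) (hz : z ∈ C) (_ : Relation.ReflTransGen step p z),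
      Uz z hz with ho₁def
    set o₂ : Set Y := ⋃ (z : Y) (hz : z ∈ C) (_ : ¬ Relation.ReflTransGen step p z),
      Uz z hz with ho₂def
    have ho₁ : IsOpen o₁ := isOpen_iUnion fun z => isOpen_iUnion fun hz =>
      isOpen_iUnion fun _ => (𝒱.convexity _ (hUz z hz)).isOpen
    have ho₂ : IsOpen o₂ := isOpen_iUnion fun z => isOpen_iUnion fun hz =>
      isOpen_iUnion fun _ => (𝒱.convexity _ (hUz z hz)).isOpen
    have hcov : C ⊆ o₁ ∪ o₂ := by
      intro z hz
      by_cases hr : Relation.ReflTransGen step p z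
      · exact Or.inl (Set.mem_iUnion.2 ⟨z, Set.mem_iUnion.2 ⟨hz, Set.mem_iUnion.2
          ⟨hr, hzUz z hz⟩⟩⟩)
      · exact Or.inr (Set.mem_iUnion.2 ⟨z, Set.mem_iUnion.2 ⟨hz, Set.mem_iUnion.2
          ⟨hr, hzUz z hz⟩⟩⟩)
    obtain ⟨s, hsC, hso₁, hso₂⟩ := hconn.isPreconnected o₁ o₂ ho₁ ho₂ hcov
      ⟨p, hp, Set.mem_iUnion.2 ⟨p, Set.mem_iUnion.2 ⟨hp, Set.mem_iUnion.2
        ⟨Relation.ReflTransGen.refl, hzUz p hp⟩⟩⟩⟩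
      ⟨q, hq, Set.mem_iUnion.2 ⟨q, Set.mem_iUnion.2 ⟨hq, Set.mem_iUnion.2
        ⟨hq', hzUz q hq⟩⟩⟩⟩
    simp only [ho₁def, ho₂def, Set.mem_iUnion] at hso₁ hso₂
    obtain ⟨z₁, hz₁, hr₁, hsU₁⟩ := hso₁
    obtain ⟨z₂, hz₂, hr₂, hsU₂⟩ := hso₂
    have hrs : Relation.ReflTransGen step p s :=
      hr₁.tail ⟨hz₁, hsC, Uz z₁ hz₁, hUz z₁ hz₁, hzUz z₁ hz₁, hsU₁, hUzconv z₁ hz₁⟩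
    exact hr₂ (hrs.tail ⟨hsC, hz₂, Uz z₂ hz₂, hUz z₂ hz₂, hsU₂, hzUz z₂ hz₂, hUzconv z₂ hz₂⟩)
  -- Step 2: a connected set `T` inside `C` with a finite "hull-budget" `F`
  clear hq
  have hTF : ∃ F T : Set Y, F.Finite ∧ IsPreconnected T ∧ p ∈ T ∧ q ∈ T ∧ T ⊆ C ∧
      T ⊆ 𝒱.hull F := by
    induction hreach with
    | refl =>
      exact ⟨{p}, {p}, Set.finite_singleton p, isPreconnected_singleton, rfl, rfl,
        Set.singleton_subset_iff.2 hp, Set.singleton_subset_iff.2 (subset_hull {p} rfl)⟩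
    | @tail b c hab hbc ih =>
      obtain ⟨F, T, hF, hT, hpT, hbT, hTC, hTh⟩ := ih
      obtain ⟨hbC, hcC, U, hU, hbU, hcU, hUconv⟩ := hbc
      set CS := 𝒱.convexity U hU with hCS
      have hbh : b ∈ 𝒱.hull (F ∪ {b, c}) := subset_hull _ (Or.inr (Or.inl rfl))
      have hch : c ∈ 𝒱.hull (F ∪ {b, c}) := subset_hull _ (Or.inr (Or.inr rfl))
      refine ⟨F ∪ {b, c}, T ∪ 𝒱.seg U b c,
        hF.union ((Set.finite_singleton c).insert b), ?_, Or.inl hpT,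
        Or.inr (CS.mem_right b hbU c hcU), ?_, ?_⟩
      · exact IsPreconnected.union b hbT (CS.mem_left b hbU c hcU) hT
          (CS.preconnected b hbU c hcU)
      · refine Set.union_subset hTC ?_
        intro s hs
        exact (hUconv b ⟨hbC, hbU⟩ c ⟨hcC, hcU⟩ hs).1
      · refine Set.union_subset (hTh.trans (hull_mono Set.subset_union_left)) ?_
        intro s hs
        exact ((hull_isConvexSet (F ∪ {b, c})) U hU b ⟨hbh, hbU⟩ c ⟨hch, hcU⟩ hs).1
  obtain ⟨F, T, hFfin, hT, hpT, hqT, hTC, hTh⟩ := hTF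
  -- Step 3: the compact connected locally convex set `D`
  set M : Set Y := C ∩ 𝒱.hull F with hM
  have hTM : T ⊆ M := Set.subset_inter hTC hTh
  set P : Set Y := connectedComponentIn M p with hP
  have hpM : p ∈ M := hTM hpT
  have hqP : q ∈ P := (hT.subset_connectedComponentIn hpT hTM) hqT
  have hpP : p ∈ P := mem_connectedComponentIn hpM
  set D : Set Y := closure P with hD
  have hPM : P ⊆ M := connectedComponentIn_subset M p
  have hPhull : P ⊆ 𝒱.hull F := hPM.trans Set.inter_subset_right
  have hDc : IsCompact D := (hY.hull_compact F hFfin).of_isClosed_subset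
    isClosed_closure (closure_mono hPhull)
  have hDpc : IsPreconnected D := (isPreconnected_connectedComponentIn).closure
  have hDC : D ⊆ C := hclosed.closure_subset_iff.2 (hPM.trans Set.inter_subset_left)
  have hpD : p ∈ D := subset_closure hpP
  have hqD : q ∈ D := subset_closure hqP
  -- Step 4: local convexity of `D`
  have hloc : ∀ z ∈ D, ∃ V ∈ 𝒱.atlas, z ∈ V ∧
      ∀ a ∈ D ∩ V, ∀ b ∈ D ∩ V, 𝒱.seg V a b ⊆ D ∩ V := by
    intro z hzD
    have hzC : z ∈ C := hDC hzD
    set U := Uz z hzC with hUdef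
    have hU : U ∈ 𝒱.atlas := hUz z hzC
    have hzU : z ∈ U := hzUz z hzC
    have hUconv := hUzconv z hzC
    set CS := 𝒱.convexity U hU with hCS
    -- an open `G ∋ z` with `closure G ∩ D ⊆ U`
    have hKc : IsCompact (D \ U) :=
      hDc.of_isClosed_subset (hDc.isClosed.sdiff CS.isOpen) Set.diff_subset
    obtain ⟨G, G', hGo, hG'o, hzG, hKG', hGdisj⟩ :=
      SeparatedNhds.of_isCompact_isCompact isCompact_singleton hKc
        (Set.disjoint_singleton_left.2 fun h => h.2 hzU)
    have hGD : closure G ∩ D ⊆ U := by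
      rintro s ⟨hsG, hsD⟩
      by_contra hsU
      have hsG' : s ∈ G' := hKG' ⟨hsD, hsU⟩
      obtain ⟨t, htG', htG⟩ := mem_closure_iff.1 hsG G' hG'o hsG'
      exact Set.disjoint_left.1 hGdisj htG htG'
    obtain ⟨V, hVo, hzV, hVsub, hVconv⟩ := CS.basis z hzU G hGo (hzG rfl)
    obtain ⟨hVatlas, hVseg⟩ := 𝒱.subchart U hU V (hVsub.trans Set.inter_subset_right)
      hVo hVconv
    refine ⟨V, hVatlas, hzV, ?_⟩
    -- `M ∩ V` is closed under `U`-segments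
    have hMVconv : ∀ a ∈ M ∩ V, ∀ b ∈ M ∩ V, 𝒱.seg U a b ⊆ M ∩ V := by
      intro a ha b hb s hs
      have haU : a ∈ U := (hVsub ha.2).2
      have hbU : b ∈ U := (hVsub hb.2).2
      have h1 := hUconv a ⟨ha.1.1, haU⟩ b ⟨hb.1.1, hbU⟩ hs
      have h2 := (hull_isConvexSet F) U hU a ⟨ha.1.2, haU⟩ b ⟨hb.1.2, hbU⟩ hs
      exact ⟨⟨h1.1, h2.1⟩, hVconv a ha.2 b hb.2 hs⟩
    -- `P ∩ V` is closed under `U`-segments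
    set B : Set Y := P ∩ V with hB
    have hBconv : ∀ a ∈ B, ∀ b ∈ B, 𝒱.seg U a b ⊆ B := by
      intro a ha b hb
      have haMV : a ∈ M ∩ V := ⟨hPM ha.1, ha.2⟩
      have hbMV : b ∈ M ∩ V := ⟨hPM hb.1, hb.2⟩
      have hMVpre : IsPreconnected (M ∩ V) :=
        preconnected_of_chartConvex hU (fun s hsv => (hVsub hsv.2).2) hMVconv haMV
      have hsubP : M ∩ V ⊆ P := by
        have hun : IsPreconnected (M ∩ V ∪ P) :=
          IsPreconnected.union a haMV ha.1 hMVpre isPreconnected_connectedComponentIn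
        have := hun.subset_connectedComponentIn (Or.inr hpP)
          (Set.union_subset Set.inter_subset_left hPM)
        exact Set.subset_union_left.trans this
      intro s hs
      exact ⟨hsubP (hMVconv a haMV b hbMV hs), (hMVconv a haMV b hbMV hs).2⟩
    have hBUz : closure B ⊆ U := by
      intro s hs
      have hsG : s ∈ closure G :=
        closure_mono (Set.inter_subset_right.trans (hVsub.trans Set.inter_subset_left)) hs
      have hsD : s ∈ D := closure_mono Set.inter_subset_left hs
      exact hGD ⟨hsG, hsD⟩
    have hBc : IsCompact (closure B) := (hY.hull_compact F hFfin).of_isClosed_subset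
      isClosed_closure (closure_mono (Set.inter_subset_left.trans hPhull))
    intro a ha b hb
    have hmemB : ∀ x ∈ D ∩ V, x ∈ closure B := by
      rintro x ⟨hxD, hxV⟩
      rw [mem_closure_iff]
      intro o ho hxo
      obtain ⟨t, htm, htP⟩ := mem_closure_iff.1 hxD (o ∩ V) (ho.inter hVo) ⟨hxo, hxV⟩
      exact ⟨t, htm.1, htP, htm.2⟩
    have hseg := seg_subset_closure hU hBUz hBconv hBc (hmemB a ha) (hmemB b hb)
    intro s hs
    rw [hVseg a ha.2 b hb.2] at hs
    exact ⟨closure_mono Set.inter_subset_left (hseg hs), hVconv a ha.2 b hb.2 hs⟩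
  exact geodesic_of_compact hDc hDpc hpD hqD hloc
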